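/- Let ι be a finite nonempty type, let G : ι → ι → ℝ be a generator matrix, and let π : ι → ℝ be a probability vector (π i ≥ 0 for all i and ∑_i π i = 1) that is reversible for G, i.e. π i · G i j = π j · G j i for all i, j, and assume π is the unique probability vector reversible for G (any probability vector ρ with ρ i · G i j = ρ j · G j i for all i, j equals π). Let v : ι → ℝ with v i > 0 for all i and set Z = ∑_i v i² · π i and π^v i = Z⁻¹ · v i² · π i. Then π^v is a probability vector, it is reversible for the tilted matrix G^v (π^v i · G^v i j = π^v j · G^v j i for all i, j), it is stationary for G^v (∑_i π^v i · G^v i j = 0 for every j), and it is the unique probability vector reversible for G^v. -/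

import Mathlib

/-- The tilted generator `G^v`: `G^v i j = G i j · v j / v i` for `j ≠ i`, and
`G^v i i = -∑_{j ≠ i} G^v i j`. -/
noncomputable def tiltedGen {ι : Type*} [Fintype ι] [DecidableEq ι]
    (G : ι → ι → ℝ) (v : ι → ℝ) (i j : ι) : ℝ :=
  if j = i then -∑ k ∈ Finset.univ.erase i, G i k * v k / v i
  else G i j * v j / v i

/-- If `π` is the (unique) reversible probability vector for the generator
matrix `G` and `v > 0`, then `π^v i = Z⁻¹ v i² π i` with `Z = ∑_i v i² π i` is a
probability vector, reversible and stationary for the tilted matrix `G^v`, and is the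
unique reversible probability vector for `G^v`. -/
theorem tilted_reversible_stationary {ι : Type*} [Fintype ι] [Nonempty ι] [DecidableEq ι]
    (G : ι → ι → ℝ) (hG1 : ∀ i j, i ≠ j → 0 ≤ G i j) (hG2 : ∀ i, ∑ j, G i j = 0)
    (π : ι → ℝ) (hπ0 : ∀ i, 0 ≤ π i) (hπ1 : ∑ i, π i = 1)
    (hrev : ∀ i j, π i * G i j = π j * G j i)
    (huniq : ∀ ρ : ι → ℝ, (∀ i, 0 ≤ ρ i) → ∑ i, ρ i = 1 →
      (∀ i j, ρ i * G i j = ρ j * G j i) → ρ = π)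
    (v : ι → ℝ) (hv : ∀ i, 0 < v i)
    (Z : ℝ) (hZ : Z = ∑ i, v i ^ 2 * π i)
    (πv : ι → ℝ) (hπv : πv = fun i => Z⁻¹ * v i ^ 2 * π i) :
    ((∀ i, 0 ≤ πv i) ∧ ∑ i, πv i = 1) ∧
    (∀ i j, πv i * tiltedGen G v i j = πv j * tiltedGen G v j i) ∧
    (∀ j, ∑ i, πv i * tiltedGen G v i j = 0) ∧
    (∀ ρ : ι → ℝ, (∀ i, 0 ≤ ρ i) → ∑ i, ρ i = 1 →
      (∀ i j, ρ i * tiltedGen G v i j = ρ j * tiltedGen G v j i) → ρ = πv) := by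
  have hvne : ∀ i, v i ≠ 0 := fun i => (hv i).ne'
  -- Z > 0
  have hZpos : 0 < Z := by
    rw [hZ]
    apply Finset.sum_pos'
    · intro i _
      have := hπ0 i
      positivity
    · by_contra h
      push_neg at h
      have : ∀ i ∈ Finset.univ, π i = 0 := by
        intro i _
        have h1 := h i (Finset.mem_univ i)
        have h2 : 0 ≤ v i ^ 2 * π i := by have := hπ0 i; positivity
        have h3 : v i ^ 2 * π i = 0 := le_antisymm h1 h2
        have := pow_pos (hv i) 2
        nlinarith [hπ0 i]
      rw [Finset.sum_congr rfl this] at hπ1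
      simp at hπ1
  have hZne : Z ≠ 0 := hZpos.ne'
  -- row sums of tiltedGen are zero
  have hrow : ∀ i, ∑ j, tiltedGen G v i j = 0 := by
    intro i
    rw [← Finset.add_sum_erase _ _ (Finset.mem_univ i)]
    have h1 : tiltedGen G v i i = -∑ k ∈ Finset.univ.erase i, G i k * v k / v i := by
      simp [tiltedGen]
    have h2 : ∑ j ∈ Finset.univ.erase i, tiltedGen G v i j
        = ∑ k ∈ Finset.univ.erase i, G i k * v k / v i := by
      apply Finset.sum_congr rfl
      intro j hj
      simp [tiltedGen, Finset.ne_of_mem_erase hj]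
    rw [h1, h2]; ring
  -- prob vector
  have hπv0 : ∀ i, 0 ≤ πv i := by
    intro i; rw [hπv]
    have := hπ0 i
    positivity
  have hπv1 : ∑ i, πv i = 1 := by
    rw [hπv]
    simp only [mul_assoc]
    rw [← Finset.mul_sum, ← hZ]
    field_simp
  -- reversibility
  have hrevv : ∀ i j, πv i * tiltedGen G v i j = πv j * tiltedGen G v j i := by
    intro i j
    by_cases hij : i = j
    · subst hij; rfl
    · have h1 : tiltedGen G v i j = G i j * v j / v i := by
        simp [tiltedGen, Ne.symm hij]
      have h2 : tiltedGen G v j i = G j i * v i / v j := by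
        simp [tiltedGen, hij]
      rw [hπv, h1, h2]
      simp only
      have h := hrev i j
      have e1 : Z⁻¹ * v i ^ 2 * π i * (G i j * v j / v i)
          = Z⁻¹ * (v i * v j) * (π i * G i j) := by
        rw [← mul_div_assoc, div_eq_iff (hvne i)]; ring
      have e2 : Z⁻¹ * v j ^ 2 * π j * (G j i * v i / v j)
          = Z⁻¹ * (v i * v j) * (π j * G j i) := by
        rw [← mul_div_assoc, div_eq_iff (hvne j)]; ring
      rw [e1, e2, h]
  -- stationarity
  have hstat : ∀ j, ∑ i, πv i * tiltedGen G v i j = 0 := by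
    intro j
    calc ∑ i, πv i * tiltedGen G v i j = ∑ i, πv j * tiltedGen G v j i := by
          exact Finset.sum_congr rfl fun i _ => hrevv i j
      _ = πv j * ∑ i, tiltedGen G v j i := by rw [Finset.mul_sum]
      _ = 0 := by rw [hrow j]; ring
  refine ⟨⟨hπv0, hπv1⟩, hrevv, hstat, ?_⟩
  -- uniqueness
  intro ρ hρ0 hρ1 hρrev
  set C : ℝ := ∑ k, ρ k / v k ^ 2 with hC
  have hCpos : 0 < C := by
    rw [hC]
    apply Finset.sum_pos'
    · intro i _
      have := hρ0 i
      positivity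
    · by_contra h
      push_neg at h
      have : ∀ i ∈ Finset.univ, ρ i = 0 := by
        intro i _
        have h1 := h i (Finset.mem_univ i)
        have h2 : 0 ≤ ρ i / v i ^ 2 := by have := hρ0 i; positivity
        have h3 : ρ i / v i ^ 2 = 0 := le_antisymm h1 h2
        have hp := pow_pos (hv i) 2
        have := div_eq_zero_iff.mp h3
        rcases this with h | h
        · exact h
        · exact absurd h hp.ne'
      rw [Finset.sum_congr rfl this] at hρ1
      simp at hρ1
  have hCne : C ≠ 0 := hCpos.ne'
  set σ : ι → ℝ := fun i => C⁻¹ * (ρ i / v i ^ 2) with hσ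
  have hσ0 : ∀ i, 0 ≤ σ i := by
    intro i; rw [hσ]
    have := hρ0 i
    positivity
  have hσ1 : ∑ i, σ i = 1 := by
    rw [hσ]
    simp only
    rw [← Finset.mul_sum, ← hC]
    field_simp
  have hσrev : ∀ i j, σ i * G i j = σ j * G j i := by
    intro i j
    by_cases hij : i = j
    · subst hij; rfl
    · have h := hρrev i j
      have h1 : tiltedGen G v i j = G i j * v j / v i := by
        simp [tiltedGen, Ne.symm hij]
      have h2 : tiltedGen G v j i = G j i * v i / v j := by
        simp [tiltedGen, hij]
      rw [h1, h2] at h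
      rw [hσ]
      simp only
      rw [← mul_div_assoc, ← mul_div_assoc, div_eq_div_iff (hvne i) (hvne j)] at h
      have key : ρ i / v i ^ 2 * G i j = ρ j / v j ^ 2 * G j i := by
        rw [div_mul_eq_mul_div, div_mul_eq_mul_div,
          div_eq_div_iff (pow_ne_zero 2 (hvne i)) (pow_ne_zero 2 (hvne j))]
        linear_combination h
      rw [mul_assoc, mul_assoc, key]
  have hσπ : σ = π := huniq σ hσ0 hσ1 hσrev
  have hρeq : ∀ i, ρ i = C * v i ^ 2 * π i := by
    intro i
    have := congrFun hσπ i
    rw [hσ] at this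
    simp only at this
    field_simp at this
    rw [div_eq_iff (pow_pos (hv i) 2).ne'] at this
    rw [this]; ring
  have hCZ : C * Z = 1 := by
    have : ∑ i, ρ i = ∑ i, C * (v i ^ 2 * π i) := by
      apply Finset.sum_congr rfl
      intro i _
      rw [hρeq i]; ring
    rw [this, ← Finset.mul_sum, ← hZ] at hρ1
    exact hρ1
  have hCeq : C = Z⁻¹ := by
    field_simp
    linarith [hCZ]
  funext i
  rw [hρeq i, hCeq, hπv]
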